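/- Let w ∈ ℝ^s have i.i.d. Rademacher entries and let B ∈ ℝ^{l×s} be fixed. Then Var(‖Bw‖²) ≤ Var(‖Bg‖²) where g has i.i.d. standard Gaussian entries; explicitly, Var(‖Bw‖²) = 2(‖BᵀB‖_F² − Σ_i (BᵀB)_{ii}²) ≤ 2‖BᵀB‖_F² = Var(‖Bg‖²). -/

import Mathlib

open MeasureTheory ProbabilityTheory

/-- Squared Frobenius norm of a matrix. -/
def frobSq {l s : ℕ} (B : Matrix (Fin l) (Fin s) ℝ) : ℝ := ∑ i, ∑ j, (B i j) ^ 2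

/-- Variance of a real random variable. -/
noncomputable def RVar {Ω : Type*} [MeasurableSpace Ω] (μ : Measure Ω) (X : Ω → ℝ) : ℝ :=
  (∫ ω, (X ω) ^ 2 ∂μ) - (∫ ω, X ω ∂μ) ^ 2


lemma iIndep_prod_int {ι Ω : Type*} [MeasurableSpace Ω] {μ : Measure Ω}
    [IsProbabilityMeasure μ] {f : ι → Ω → ℝ} (hmeas : ∀ i, Measurable (f i))
    (hindep : iIndepFun f μ)
    (hint : ∀ i, Integrable (f i) μ) (t : Finset ι) :
    Integrable (fun ω => ∏ i ∈ t, f i ω) μ ∧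
      ∫ ω, ∏ i ∈ t, f i ω ∂μ = ∏ i ∈ t, ∫ ω, f i ω ∂μ := by
  classical
  induction t using Finset.induction_on with
  | empty => simp
  | @insert a u ha ih =>
    have hI : IndepFun (∏ i ∈ u, f i) (f a) μ :=
      hindep.indepFun_finsetProd_of_notMem hmeas ha
    have hprodfun : (∏ i ∈ u, f i) = fun ω => ∏ i ∈ u, f i ω := by
      funext ω; simp
    have hint' : Integrable (∏ i ∈ u, f i) μ := by rw [hprodfun]; exact ih.1
    have hintm : Integrable ((∏ i ∈ u, f i) * f a) μ := hI.integrable_mul hint' (hint a)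
    constructor
    · refine hintm.congr (Filter.Eventually.of_forall fun ω => ?_)
      simp [Finset.prod_insert ha, mul_comm]
    · have := hI.integral_mul_eq_mul_integral hint'.aestronglyMeasurable (hint a).aestronglyMeasurable
      have heq : ∫ ω, ∏ i ∈ insert a u, f i ω ∂μ = ∫ ω, ((∏ i ∈ u, f i) * f a) ω ∂μ := by
        refine integral_congr_ae (Filter.Eventually.of_forall fun ω => ?_)
        simp [Finset.prod_insert ha, mul_comm]
      rw [heq, this, Finset.prod_insert ha, hprodfun, ih.2, mul_comm]

lemma moment4 {Ω : Type*} [MeasurableSpace Ω] {μ : Measure Ω} [IsProbabilityMeasure μ]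
    {s : ℕ} {X : Fin s → Ω → ℝ} (hmeas : ∀ i, Measurable (X i))
    (hindep : iIndepFun X μ)
    (hint : ∀ i n, Integrable (fun ω => X i ω ^ n) μ)
    (h1 : ∀ i, ∫ ω, X i ω ∂μ = 0) (h2 : ∀ i, ∫ ω, X i ω ^ 2 ∂μ = 1)
    (h3 : ∀ i, ∫ ω, X i ω ^ 3 ∂μ = 0) {c : ℝ} (h4 : ∀ i, ∫ ω, X i ω ^ 4 ∂μ = c)
    (i j p q : Fin s) :
    Integrable (fun ω => X i ω * X j ω * X p ω * X q ω) μ ∧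
      ∫ ω, X i ω * X j ω * X p ω * X q ω ∂μ =
        (if i = j then (1:ℝ) else 0) * (if p = q then 1 else 0)
        + (if i = p then (1:ℝ) else 0) * (if j = q then 1 else 0)
        + (if i = q then (1:ℝ) else 0) * (if j = p then 1 else 0)
        + (if i = j ∧ j = p ∧ p = q then c - 3 else 0) := by
  classical
  set m : Fin s → ℕ := fun r =>
    (if r = i then 1 else 0) + (if r = j then 1 else 0) +
    (if r = p then 1 else 0) + (if r = q then 1 else 0) with hm
  have hprod : ∀ ω, X i ω * X j ω * X p ω * X q ω = ∏ r, X r ω ^ m r := by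
    intro ω
    simp only [hm, pow_add, Finset.prod_mul_distrib, pow_ite, pow_one, pow_zero,
      Finset.prod_ite_eq', Finset.mem_univ, if_true]
  have key := iIndep_prod_int (f := fun r ω => X r ω ^ m r)
    (fun r => (hmeas r).pow_const (m r))
    (hindep.comp (fun r x => x ^ m r) (fun r => measurable_id.pow_const (m r)))
    (fun r => hint r (m r)) Finset.univ
  have hM0 : ∀ r : Fin s, ∫ ω, X r ω ^ (0:ℕ) ∂μ = 1 := by intro r; simp
  have hM1 : ∀ r : Fin s, ∫ ω, X r ω ^ (1:ℕ) ∂μ = 0 := by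
    intro r; simpa using h1 r
  refine ⟨?_, ?_⟩
  · refine key.1.congr (Filter.Eventually.of_forall fun ω => (hprod ω).symm)
  · have heq : ∫ ω, X i ω * X j ω * X p ω * X q ω ∂μ = ∏ r, ∫ ω, X r ω ^ m r ∂μ := by
      rw [← key.2]; exact integral_congr_ae (Filter.Eventually.of_forall hprod)
    rw [heq]
    by_cases hij : i = j
    · subst hij
      by_cases hpq : p = q
      · subst hpq
        by_cases hip : i = p
        · subst hip
          rw [Finset.prod_eq_single i (fun r _ hr => by
            simp only [hm, if_neg hr]; exact hM0 r) (by simp)]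
          simp only [hm, if_pos rfl]
          norm_num [h4 i]
        · rw [Finset.prod_eq_one (fun r _ => ?_)]
          · simp [hip]
          · by_cases hri : r = i
            · subst hri
              simp only [hm, if_pos rfl, if_neg hip]
              norm_num; exact h2 r
            · by_cases hrp : r = p
              · subst hrp
                simp only [hm, if_neg hri, if_pos rfl]
                norm_num; exact h2 r
              · simp only [hm, if_neg hri, if_neg hrp]
                norm_num
      · -- i = j, p ≠ q
        by_cases hip : i = p
        · subst hip
          have hq : q ≠ i := fun h => hpq h.symm
          rw [Finset.prod_eq_zero (Finset.mem_univ q)]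
          · simp [hpq, fun h : i = q => hq h.symm]
          · simp only [hm, if_pos rfl, if_neg hq]
            norm_num; exact h1 q
        · by_cases hiq : i = q
          · subst hiq
            have hp : p ≠ i := fun h => hip h.symm
            rw [Finset.prod_eq_zero (Finset.mem_univ p)]
            · simp [hpq, hip, fun h : i = p => hp h.symm]
            · simp only [hm, if_neg hp, if_pos rfl, if_neg (fun h : p = i => hp h)]
              norm_num; exact h1 p
          · have hp : p ≠ i := fun h => hip h.symm
            rw [Finset.prod_eq_zero (Finset.mem_univ p)]
            · simp [hpq, hip, hiq]
            · simp only [hm, if_neg hp, if_pos rfl, if_neg hpq]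
              norm_num; exact h1 p
    · by_cases hpq : p = q
      · subst hpq
        by_cases hip : i = p
        · subst hip
          have hj : j ≠ i := fun h => hij h.symm
          rw [Finset.prod_eq_zero (Finset.mem_univ j)]
          · simp [hij, hj]
          · simp only [hm, if_neg hj, if_pos rfl]
            norm_num; exact h1 j
        · by_cases hjp : j = p
          · subst hjp
            rw [Finset.prod_eq_zero (Finset.mem_univ i)]
            · simp [hij, hip]
            · simp only [hm, if_pos rfl, if_neg hij, if_neg hip]
              norm_num; exact h1 i
          · rw [Finset.prod_eq_zero (Finset.mem_univ i)]
            · simp [hij, hip, hjp]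
            · simp only [hm, if_pos rfl, if_neg hij, if_neg hip]
              norm_num; exact h1 i
      · -- i ≠ j, p ≠ q
        by_cases hip : i = p
        · subst hip
          by_cases hjq : j = q
          · subst hjq
            rw [Finset.prod_eq_one (fun r _ => ?_)]
            · simp [hij, hpq, fun h : i = j => hij h]
            · by_cases hri : r = i
              · subst hri
                simp only [hm, if_pos rfl, if_neg (fun h : r = j => hij h)]
                norm_num; exact h2 r
              · by_cases hrj : r = j
                · subst hrj
                  simp only [hm, if_neg hri, if_pos rfl]
                  norm_num; exact h2 r
                · simp only [hm, if_neg hri, if_neg hrj]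
                  norm_num
          · have hj : j ≠ i := fun h => hij h.symm
            rw [Finset.prod_eq_zero (Finset.mem_univ j)]
            · simp [hij, hjq, hpq]
            · simp only [hm, if_neg hj, if_pos rfl, if_neg hj, if_neg hjq]
              norm_num; exact h1 j
        · by_cases hiq : i = q
          · subst hiq
            by_cases hjp : j = p
            · subst hjp
              rw [Finset.prod_eq_one (fun r _ => ?_)]
              · simp [hij, hip, hpq, fun h : i = j => hij h]
              · by_cases hri : r = i
                · subst hri
                  simp only [hm, if_pos rfl, if_neg (fun h : r = j => hij h)]
                  norm_num; exact h2 r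
                · by_cases hrj : r = j
                  · subst hrj
                    simp only [hm, if_neg hri, if_pos rfl]
                    norm_num; exact h2 r
                  · simp only [hm, if_neg hri, if_neg hrj]
                    norm_num
            · have hj : j ≠ i := fun h => hij h.symm
              rw [Finset.prod_eq_zero (Finset.mem_univ j)]
              · simp [hij, hip, hjp, hpq]
              · simp only [hm, if_neg hj, if_pos rfl, if_neg hjp, if_neg hj]
                norm_num; exact h1 j
          · rw [Finset.prod_eq_zero (Finset.mem_univ i)]
            · simp [hij, hip, hiq]
            · simp only [hm, if_pos rfl, if_neg hij, if_neg hip, if_neg hiq]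
              norm_num; exact h1 i

lemma moment2 {Ω : Type*} [MeasurableSpace Ω] {μ : Measure Ω} [IsProbabilityMeasure μ]
    {s : ℕ} {X : Fin s → Ω → ℝ}
    (hindep : iIndepFun X μ)
    (hint : ∀ i n, Integrable (fun ω => X i ω ^ n) μ)
    (h1 : ∀ i, ∫ ω, X i ω ∂μ = 0) (h2 : ∀ i, ∫ ω, X i ω ^ 2 ∂μ = 1)
    (i j : Fin s) :
    Integrable (fun ω => X i ω * X j ω) μ ∧
      ∫ ω, X i ω * X j ω ∂μ = if i = j then 1 else 0 := by
  by_cases hij : i = j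
  · subst hij
    refine ⟨(hint i 2).congr (Filter.Eventually.of_forall fun ω => by ring_nf), ?_⟩
    rw [if_pos rfl, ← h2 i]
    exact integral_congr_ae (Filter.Eventually.of_forall fun ω => by ring)
  · have hI : IndepFun (X i) (X j) μ := hindep.indepFun hij
    have hii : Integrable (X i) μ := (hint i 1).congr (Filter.Eventually.of_forall fun ω => by simp)
    have hjj : Integrable (X j) μ := (hint j 1).congr (Filter.Eventually.of_forall fun ω => by simp)
    refine ⟨(hI.integrable_mul hii hjj).congr (Filter.Eventually.of_forall fun ω => rfl), ?_⟩
    rw [if_neg hij]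
    have := hI.integral_mul_eq_mul_integral hii.aestronglyMeasurable hjj.aestronglyMeasurable
    have h' : ∫ ω, X i ω * X j ω ∂μ = ∫ ω, (X i * X j) ω ∂μ := rfl
    rw [h', this, h1 i, h1 j, mul_zero]

lemma var_quadform {Ω : Type*} [MeasurableSpace Ω] (μ : Measure Ω) [IsProbabilityMeasure μ]
    {l s : ℕ} (B : Matrix (Fin l) (Fin s) ℝ) {X : Fin s → Ω → ℝ}
    (hmeas : ∀ i, Measurable (X i))
    (hindep : iIndepFun X μ)
    (hint : ∀ i n, Integrable (fun ω => X i ω ^ n) μ)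
    (h1 : ∀ i, ∫ ω, X i ω ∂μ = 0) (h2 : ∀ i, ∫ ω, X i ω ^ 2 ∂μ = 1)
    (h3 : ∀ i, ∫ ω, X i ω ^ 3 ∂μ = 0) {c : ℝ} (h4 : ∀ i, ∫ ω, X i ω ^ 4 ∂μ = c) :
    RVar μ (fun ω => ∑ k, (B.mulVec (fun i => X i ω) k) ^ 2) =
      2 * frobSq (B.transpose * B) + (c - 3) * ∑ i, ((B.transpose * B) i i) ^ 2 := by
  classical
  set A : Matrix (Fin s) (Fin s) ℝ := B.transpose * B with hA
  have hAs : ∀ i j, A j i = A i j := by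
    intro i j
    simp only [hA, Matrix.mul_apply, Matrix.transpose_apply]
    exact Finset.sum_congr rfl fun k _ => mul_comm _ _
  have hQ : ∀ v : Fin s → ℝ, ∑ k, (B.mulVec v k) ^ 2 =
      ∑ i, ∑ j, A i j * (v i * v j) := by
    intro v
    simp only [Matrix.mulVec, dotProduct, sq, Finset.sum_mul_sum, hA,
      Matrix.mul_apply, Matrix.transpose_apply, Finset.sum_mul, Finset.mul_sum]
    rw [Finset.sum_comm]
    refine Finset.sum_congr rfl fun i _ => ?_
    rw [Finset.sum_comm]
    refine Finset.sum_congr rfl fun j _ => Finset.sum_congr rfl fun k _ => by ring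
  -- expectation
  have hEX : ∫ ω, (∑ i, ∑ j, A i j * (X i ω * X j ω)) ∂μ = ∑ i, A i i := by
    rw [integral_finset_sum _ (fun i _ => integrable_finset_sum _
      (fun j _ => ((moment2 hindep hint h1 h2 i j).1.const_mul (A i j))))]
    calc ∑ i, ∫ ω, ∑ j, A i j * (X i ω * X j ω) ∂μ
        = ∑ i, ∑ j, A i j * (if i = j then (1:ℝ) else 0) := by
          refine Finset.sum_congr rfl fun i _ => ?_
          rw [integral_finset_sum _ (fun j _ => ((moment2 hindep hint h1 h2 i j).1.const_mul _))]
          exact Finset.sum_congr rfl fun j _ => by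
            rw [integral_const_mul, (moment2 hindep hint h1 h2 i j).2]
      _ = ∑ i, A i i := by simp
  have int4 := fun i j p q => (moment4 hmeas hindep hint h1 h2 h3 h4 i j p q).1
  have m4 := fun i j p q => (moment4 hmeas hindep hint h1 h2 h3 h4 i j p q).2
  have hsq : ∀ ω, (∑ i, ∑ j, A i j * (X i ω * X j ω)) ^ 2 =
      ∑ i, ∑ j, ∑ p, ∑ q, A i j * A p q * (X i ω * X j ω * X p ω * X q ω) := by
    intro ω
    rw [sq, Finset.sum_mul_sum]
    refine Finset.sum_congr rfl fun i _ => ?_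
    simp_rw [Finset.sum_mul_sum]
    rw [Finset.sum_comm]
    refine Finset.sum_congr rfl fun j _ => Finset.sum_congr rfl fun p _ =>
      Finset.sum_congr rfl fun q _ => by ring
  have hEX2 : ∫ ω, (∑ i, ∑ j, A i j * (X i ω * X j ω)) ^ 2 ∂μ =
      (∑ i, A i i) ^ 2 + 2 * frobSq A + (c - 3) * ∑ i, (A i i) ^ 2 := by
    have hkey : ∫ ω, (∑ i, ∑ j, A i j * (X i ω * X j ω)) ^ 2 ∂μ
        = ∑ i, ∑ j, ∑ p, ∑ q, A i j * A p q *
            ((if i = j then (1:ℝ) else 0) * (if p = q then 1 else 0)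
              + (if i = p then (1:ℝ) else 0) * (if j = q then 1 else 0)
              + (if i = q then (1:ℝ) else 0) * (if j = p then 1 else 0)
              + (if i = j ∧ j = p ∧ p = q then c - 3 else 0)) := by
      rw [integral_congr_ae (Filter.Eventually.of_forall fun ω => hsq ω)]
      rw [integral_finset_sum _ (fun i _ => integrable_finset_sum _ fun j _ =>
        integrable_finset_sum _ fun p _ => integrable_finset_sum _ fun q _ =>
          (int4 i j p q).const_mul _)]
      refine Finset.sum_congr rfl fun i _ => ?_
      rw [integral_finset_sum _ (fun j _ => integrable_finset_sum _ fun p _ =>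
        integrable_finset_sum _ fun q _ => (int4 i j p q).const_mul _)]
      refine Finset.sum_congr rfl fun j _ => ?_
      rw [integral_finset_sum _ (fun p _ => integrable_finset_sum _ fun q _ =>
        (int4 i j p q).const_mul _)]
      refine Finset.sum_congr rfl fun p _ => ?_
      rw [integral_finset_sum _ (fun q _ => (int4 i j p q).const_mul _)]
      refine Finset.sum_congr rfl fun q _ => ?_
      rw [integral_const_mul, m4 i j p q]
    rw [hkey]
    simp_rw [mul_add, Finset.sum_add_distrib]
    have S1 : (∑ i : Fin s, ∑ j : Fin s, ∑ p : Fin s, ∑ q : Fin s, A i j * A p q *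
        ((if i = j then (1:ℝ) else 0) * (if p = q then 1 else 0))) = (∑ i, A i i) ^ 2 := by
      simp only [mul_ite, ite_mul, mul_one, mul_zero, zero_mul, one_mul,
        Finset.sum_ite_eq, Finset.sum_ite_eq', Finset.mem_univ, if_true,
        Finset.sum_ite_irrel, Finset.sum_const_zero]
      rw [sq, Finset.sum_mul_sum]
    have S2 : (∑ i : Fin s, ∑ j : Fin s, ∑ p : Fin s, ∑ q : Fin s, A i j * A p q *
        ((if i = p then (1:ℝ) else 0) * (if j = q then 1 else 0))) = frobSq A := by
      simp only [mul_ite, ite_mul, mul_one, mul_zero, zero_mul, one_mul,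
        Finset.sum_ite_eq, Finset.sum_ite_eq', Finset.mem_univ, if_true,
        Finset.sum_ite_irrel, Finset.sum_const_zero, frobSq, sq]
    have S3 : (∑ i : Fin s, ∑ j : Fin s, ∑ p : Fin s, ∑ q : Fin s, A i j * A p q *
        ((if i = q then (1:ℝ) else 0) * (if j = p then 1 else 0))) = frobSq A := by
      simp only [mul_ite, ite_mul, mul_one, mul_zero, zero_mul, one_mul,
        Finset.sum_ite_eq, Finset.sum_ite_eq', Finset.mem_univ, if_true,
        Finset.sum_ite_irrel, Finset.sum_const_zero, frobSq, sq]
      refine Finset.sum_congr rfl fun i _ => Finset.sum_congr rfl fun j _ => ?_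
      rw [hAs i j]
    have S4 : (∑ i : Fin s, ∑ j : Fin s, ∑ p : Fin s, ∑ q : Fin s, A i j * A p q *
        (if i = j ∧ j = p ∧ p = q then c - 3 else 0)) = (c - 3) * ∑ i, (A i i) ^ 2 := by
      simp only [ite_and, mul_ite, ite_mul, mul_one, mul_zero, zero_mul, one_mul,
        Finset.sum_ite_eq, Finset.sum_ite_eq', Finset.mem_univ, if_true,
        Finset.sum_ite_irrel, Finset.sum_const_zero]
      rw [Finset.mul_sum]
      exact Finset.sum_congr rfl fun i _ => by ring
    rw [S1, S2, S3, S4]; ring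
  have hfun : (fun ω => ∑ k, (B.mulVec (fun i => X i ω) k) ^ 2)
      = fun ω => ∑ i, ∑ j, A i j * (X i ω * X j ω) := funext fun ω => hQ _
  rw [hfun]
  rw [show RVar μ (fun ω => ∑ i, ∑ j, A i j * (X i ω * X j ω))
      = (∫ ω, (∑ i, ∑ j, A i j * (X i ω * X j ω)) ^ 2 ∂μ)
        - (∫ ω, ∑ i, ∑ j, A i j * (X i ω * X j ω) ∂μ) ^ 2 from rfl]
  rw [hEX2, hEX]; ring


lemma rademacher_ae {Ω : Type*} [MeasurableSpace Ω] {μ : Measure Ω} [IsProbabilityMeasure μ]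
    {f : Ω → ℝ} (hf : Measurable f) (ha : μ {ω | f ω = 1} = 1/2) (hb : μ {ω | f ω = -1} = 1/2) :
    ∀ᵐ ω ∂μ, f ω = 1 ∨ f ω = -1 := by
  have hS1 : MeasurableSet {ω | f ω = 1} := hf (measurableSet_singleton 1)
  have hS2 : MeasurableSet {ω | f ω = -1} := hf (measurableSet_singleton (-1))
  have hdisj : Disjoint {ω | f ω = 1} {ω | f ω = -1} := by
    rw [Set.disjoint_left]
    intro ω h1 h2
    simp only [Set.mem_setOf_eq] at h1 h2
    rw [h1] at h2; norm_num at h2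
  have hunion : μ ({ω | f ω = 1} ∪ {ω | f ω = -1}) = 1 := by
    rw [measure_union hdisj hS2, ha, hb]
    rw [ENNReal.div_add_div_same, one_add_one_eq_two,
      ENNReal.div_self two_ne_zero ENNReal.ofNat_ne_top]
  have hcompl : μ ({ω | f ω = 1} ∪ {ω | f ω = -1})ᶜ = 0 := by
    rw [measure_compl (hS1.union hS2) (measure_ne_top μ _), hunion, measure_univ, tsub_self]
  filter_upwards [measure_eq_zero_iff_ae_notMem.mp hcompl] with ω hω
  simpa [Set.mem_union, Set.mem_setOf_eq, not_or] using not_not.mp (by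
    intro h; exact hω (by simpa [Set.mem_compl_iff, Set.mem_union] using h))

lemma rademacher_moments {Ω : Type*} [MeasurableSpace Ω] {μ : Measure Ω} [IsProbabilityMeasure μ]
    {f : Ω → ℝ} (hf : Measurable f) (ha : μ {ω | f ω = 1} = 1/2) (hb : μ {ω | f ω = -1} = 1/2) :
    (∀ n : ℕ, Integrable (fun ω => f ω ^ n) μ) ∧ (∫ ω, f ω ∂μ = 0) ∧
      (∫ ω, f ω ^ 2 ∂μ = 1) ∧ (∫ ω, f ω ^ 3 ∂μ = 0) ∧ (∫ ω, f ω ^ 4 ∂μ = 1) := by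
  have hae := rademacher_ae hf ha hb
  have hint : ∀ n : ℕ, Integrable (fun ω => f ω ^ n) μ := by
    intro n
    refine Integrable.mono' (integrable_const (1:ℝ)) ((hf.pow_const n).aestronglyMeasurable) ?_
    filter_upwards [hae] with ω hω
    rcases hω with h | h <;> simp [h, abs_pow]
  have hS1 : MeasurableSet {ω | f ω = 1} := hf (measurableSet_singleton 1)
  have hS2 : MeasurableSet {ω | f ω = -1} := hf (measurableSet_singleton (-1))
  have hEf : ∫ ω, f ω ∂μ = 0 := by
    have hrepr : f =ᵐ[μ] fun ω =>
        Set.indicator {ω | f ω = 1} (fun _ => (1:ℝ)) ω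
          - Set.indicator {ω | f ω = -1} (fun _ => (1:ℝ)) ω := by
      filter_upwards [hae] with ω hω
      rcases hω with h | h
      · have h2 : ω ∉ {ω | f ω = -1} := by simp [Set.mem_setOf_eq, h]; norm_num
        simp [Set.indicator_of_mem (show ω ∈ {ω | f ω = 1} from h),
          Set.indicator_of_notMem h2, h]
      · have h2 : ω ∉ {ω | f ω = 1} := by simp [Set.mem_setOf_eq, h]; norm_num
        simp [Set.indicator_of_mem (show ω ∈ {ω | f ω = -1} from h),
          Set.indicator_of_notMem h2, h]
    rw [integral_congr_ae hrepr, integral_sub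
      ((integrable_const (1:ℝ)).indicator hS1) ((integrable_const (1:ℝ)).indicator hS2),
      integral_indicator_const _ hS1, integral_indicator_const _ hS2]
    simp [measureReal_def, ha, hb]
  refine ⟨hint, hEf, ?_, ?_, ?_⟩
  · have : (fun ω => f ω ^ 2) =ᵐ[μ] fun _ => (1:ℝ) := by
      filter_upwards [hae] with ω hω; rcases hω with h | h <;> simp [h]
    rw [integral_congr_ae this]; simp
  · have : (fun ω => f ω ^ 3) =ᵐ[μ] f := by
      filter_upwards [hae] with ω hω; rcases hω with h | h <;> rw [h] <;> norm_num
    rw [integral_congr_ae this, hEf]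
  · have : (fun ω => f ω ^ 4) =ᵐ[μ] fun _ => (1:ℝ) := by
      filter_upwards [hae] with ω hω; rcases hω with h | h <;> rw [h] <;> norm_num
    rw [integral_congr_ae this]; simp


open Real
open scoped ENNReal NNReal

noncomputable section

lemma hJint (n : ℕ) : Integrable (fun x : ℝ => x ^ n * Real.exp (-(1/2) * x ^ 2)) := by
  have h := integrable_rpow_mul_exp_neg_mul_sq (b := 1/2) (by norm_num)
    (s := (n:ℝ)) (by exact_mod_cast neg_one_lt_zero.trans_le (Nat.cast_nonneg n))
  simpa [Real.rpow_natCast] using h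

lemma Jodd (n : ℕ) (hn : Odd n) : ∫ x : ℝ, x ^ n * Real.exp (-(1/2) * x ^ 2) = 0 := by
  set f : ℝ → ℝ := fun x => x ^ n * Real.exp (-(1/2) * x ^ 2) with hf
  have h1 : ∫ x : ℝ, f (-x) = ∫ x : ℝ, f x := integral_neg_eq_self f volume
  have h2 : ∀ x : ℝ, f (-x) = - f x := by
    intro x; simp only [hf, hn.neg_pow, neg_sq, neg_mul]
  rw [show (fun x => f (-x)) = fun x => - f x from funext h2] at h1
  rw [integral_neg] at h1
  linarith

lemma Jeven (n : ℕ) (hn : Even n) : ∫ x : ℝ, x ^ n * Real.exp (-(1/2) * x ^ 2)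
    = 2 * ∫ x in Set.Ioi (0:ℝ), x ^ n * Real.exp (-(1/2) * x ^ 2) := by
  set f : ℝ → ℝ := fun x => x ^ n * Real.exp (-(1/2) * x ^ 2) with hf
  have hsym : ∀ x : ℝ, f (-x) = f x := by
    intro x; simp only [hf, hn.neg_pow, neg_sq]
  have hsplit := integral_add_compl (measurableSet_Ioi (a := (0:ℝ))) (hJint n)
  rw [Set.compl_Ioi] at hsplit
  have hIic : ∫ x in Set.Iic (0:ℝ), f x = ∫ x in Set.Ioi (0:ℝ), f x := by
    rw [show Set.Iic (0:ℝ) = Set.Iic (-(0:ℝ)) by norm_num, ← integral_comp_neg_Ioi]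
    exact integral_congr_ae (Filter.Eventually.of_forall fun x => hsym x)
  calc ∫ x : ℝ, f x = (∫ x in Set.Ioi (0:ℝ), f x) + ∫ x in Set.Iic (0:ℝ), f x := hsplit.symm
    _ = 2 * ∫ x in Set.Ioi (0:ℝ), f x := by rw [hIic]; ring

lemma JIoi (n : ℕ) : ∫ x in Set.Ioi (0:ℝ), x ^ n * Real.exp (-(1/2) * x ^ 2)
    = ((1:ℝ)/2) ^ (-(((n:ℝ)) + 1)/2) * (1/2) * Real.Gamma (((n:ℝ) + 1)/2) := by
  have h := integral_rpow_mul_exp_neg_mul_rpow (p := 2) (q := (n:ℝ)) (b := 1/2)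
    (by norm_num) (by exact_mod_cast neg_one_lt_zero.trans_le (Nat.cast_nonneg n)) (by norm_num)
  have hconv : ∀ x : ℝ, x ^ ((n:ℝ)) * Real.exp (-(1/2) * x ^ (2:ℝ))
      = x ^ n * Real.exp (-(1/2) * x ^ 2) := by
    intro x
    rw [Real.rpow_natCast, show (2:ℝ) = ((2:ℕ):ℝ) by norm_num, Real.rpow_natCast]
  rw [setIntegral_congr_fun measurableSet_Ioi (fun x _ => (hconv x).symm), h]

lemma J2 : ∫ x : ℝ, x ^ 2 * Real.exp (-(1/2) * x ^ 2) = Real.sqrt 2 * Real.sqrt π := by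
  rw [Jeven 2 (by norm_num), JIoi 2]
  have hG : Real.Gamma ((((2:ℕ):ℝ) + 1)/2) = Real.sqrt π / 2 := by
    rw [show (((2:ℕ):ℝ) + 1)/2 = 1/2 + 1 by norm_num,
      Real.Gamma_add_one (by norm_num), Real.Gamma_one_half_eq]
    ring
  have hr : ((1:ℝ)/2) ^ (-(((2:ℕ):ℝ) + 1)/2) = 2 * Real.sqrt 2 := by
    rw [show ((1:ℝ)/2) = 2⁻¹ by norm_num,
      show (-(((2:ℕ):ℝ) + 1)/2) = -((3:ℝ)/2) by norm_num,
      Real.inv_rpow (by norm_num), Real.rpow_neg (by norm_num), inv_inv,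
      show ((3:ℝ)/2) = 1 + 1/2 by norm_num, Real.rpow_add (by norm_num),
      Real.rpow_one, ← Real.sqrt_eq_rpow]
  rw [hG, hr]; ring

lemma J4 : ∫ x : ℝ, x ^ 4 * Real.exp (-(1/2) * x ^ 2) = 3 * (Real.sqrt 2 * Real.sqrt π) := by
  rw [Jeven 4 (by decide), JIoi 4]
  have hG : Real.Gamma ((((4:ℕ):ℝ) + 1)/2) = 3/4 * Real.sqrt π := by
    rw [show (((4:ℕ):ℝ) + 1)/2 = 3/2 + 1 by norm_num,
      Real.Gamma_add_one (by norm_num),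
      show (3:ℝ)/2 = 1/2 + 1 by norm_num,
      Real.Gamma_add_one (by norm_num), Real.Gamma_one_half_eq]
    ring
  have hr : ((1:ℝ)/2) ^ (-(((4:ℕ):ℝ) + 1)/2) = 4 * Real.sqrt 2 := by
    rw [show ((1:ℝ)/2) = 2⁻¹ by norm_num,
      show (-(((4:ℕ):ℝ) + 1)/2) = -((5:ℝ)/2) by norm_num,
      Real.inv_rpow (by norm_num), Real.rpow_neg (by norm_num), inv_inv,
      show ((5:ℝ)/2) = 2 + 1/2 by norm_num, Real.rpow_add (by norm_num),
      show ((2:ℝ):ℝ) ^ (2:ℝ) = 4 by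
        rw [show (2:ℝ) = ((2:ℕ):ℝ) by norm_num, Real.rpow_natCast]; norm_num,
      ← Real.sqrt_eq_rpow]
  rw [hG, hr]; ring

lemma gaussianPDFReal01 (x : ℝ) :
    gaussianPDFReal 0 1 x = (Real.sqrt (2 * π))⁻¹ * Real.exp (-(1/2) * x ^ 2) := by
  rw [gaussianPDFReal]
  simp only [NNReal.coe_one, mul_one, sub_zero]
  congr 1
  ring_nf

lemma integral_gaussianReal01 (g : ℝ → ℝ) :
    ∫ x, g x ∂(gaussianReal 0 1) = ∫ x, gaussianPDFReal 0 1 x * g x := by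
  rw [gaussianReal_of_var_ne_zero 0 one_ne_zero]
  have h : (gaussianPDF 0 1) = fun x => ((gaussianPDFReal 0 1 x).toNNReal : ℝ≥0∞) := by
    funext x; rfl
  rw [h, integral_withDensity_eq_integral_smul (measurable_gaussianPDFReal 0 1).real_toNNReal]
  refine integral_congr_ae (Filter.Eventually.of_forall fun x => ?_)
  simp [NNReal.smul_def, Real.coe_toNNReal _ (gaussianPDFReal_nonneg 0 1 x)]

lemma integrable_pow_gaussianReal01 (n : ℕ) :
    Integrable (fun x : ℝ => x ^ n) (gaussianReal 0 1) := by
  rw [gaussianReal_of_var_ne_zero 0 one_ne_zero]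
  have h : (gaussianPDF 0 1) = fun x => ((gaussianPDFReal 0 1 x).toNNReal : ℝ≥0∞) := by
    funext x; rfl
  rw [h, integrable_withDensity_iff
    (measurable_gaussianPDFReal 0 1).real_toNNReal.coe_nnreal_ennreal
    (Filter.Eventually.of_forall fun x => ENNReal.coe_lt_top)]
  have : (fun x : ℝ => x ^ n * (((gaussianPDFReal 0 1 x).toNNReal : ℝ≥0∞)).toReal)
      = fun x : ℝ => (Real.sqrt (2 * π))⁻¹ * (x ^ n * Real.exp (-(1/2) * x ^ 2)) := by
    funext x
    rw [ENNReal.coe_toReal, Real.coe_toNNReal _ (gaussianPDFReal_nonneg 0 1 x),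
      gaussianPDFReal01]
    ring
  rw [this]
  exact (hJint n).const_mul _

lemma gaussianReal01_moment (n : ℕ) :
    ∫ x, x ^ n ∂(gaussianReal 0 1)
      = (Real.sqrt (2 * π))⁻¹ * ∫ x : ℝ, x ^ n * Real.exp (-(1/2) * x ^ 2) := by
  rw [integral_gaussianReal01 (fun x => x ^ n)]
  rw [← integral_const_mul]
  refine integral_congr_ae (Filter.Eventually.of_forall fun x => ?_)
  simp only []
  rw [gaussianPDFReal01]; ring

lemma sqrt2pi : Real.sqrt (2 * π) = Real.sqrt 2 * Real.sqrt π :=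
  Real.sqrt_mul (by norm_num) π

lemma sqrt2pi_pos : 0 < Real.sqrt (2 * π) :=
  Real.sqrt_pos.mpr (by positivity)

lemma gm1 : ∫ x, x ^ 1 ∂(gaussianReal 0 1) = 0 := by
  rw [gaussianReal01_moment, Jodd 1 (by norm_num)]; ring

lemma gm3 : ∫ x, x ^ 3 ∂(gaussianReal 0 1) = 0 := by
  rw [gaussianReal01_moment, Jodd 3 (by decide)]; ring

lemma gm2 : ∫ x, x ^ 2 ∂(gaussianReal 0 1) = 1 := by
  rw [gaussianReal01_moment, J2, sqrt2pi]
  have h2 : Real.sqrt 2 ≠ 0 := ne_of_gt (Real.sqrt_pos.mpr (by norm_num))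
  have hp : Real.sqrt π ≠ 0 := ne_of_gt (Real.sqrt_pos.mpr pi_pos)
  field_simp

lemma gm4 : ∫ x, x ^ 4 ∂(gaussianReal 0 1) = 3 := by
  rw [gaussianReal01_moment, J4, sqrt2pi]
  have h2 : Real.sqrt 2 ≠ 0 := ne_of_gt (Real.sqrt_pos.mpr (by norm_num))
  have hp : Real.sqrt π ≠ 0 := ne_of_gt (Real.sqrt_pos.mpr pi_pos)
  field_simp

end

/-- The Hutchinson (Rademacher) estimator `‖Bw‖²` of `‖B‖_F²` has variance
`2(‖BᵀB‖_F² - ∑ᵢ (BᵀB)ᵢᵢ²)`, which is at most the variance `2‖BᵀB‖_F²` of the Gaussian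
estimator `‖Bg‖²`. -/
theorem stmt17 {Ω₁ Ω₂ : Type*} [MeasurableSpace Ω₁] [MeasurableSpace Ω₂]
    (μ : Measure Ω₁) [IsProbabilityMeasure μ] (ν : Measure Ω₂) [IsProbabilityMeasure ν]
    {l s : ℕ} (B : Matrix (Fin l) (Fin s) ℝ)
    (w : Ω₁ → Fin s → ℝ) (g : Ω₂ → Fin s → ℝ)
    (hwmeas : ∀ i, Measurable fun ω => w ω i)
    (hwindep : iIndepFun (fun i ω => w ω i) μ)
    (hwdist : ∀ i, μ {ω | w ω i = 1} = 1 / 2 ∧ μ {ω | w ω i = -1} = 1 / 2)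
    (hgmeas : ∀ i, Measurable fun ω => g ω i)
    (hgindep : iIndepFun (fun i ω => g ω i) ν)
    (hgdist : ∀ i, Measure.map (fun ω => g ω i) ν = gaussianReal 0 1) :
    RVar μ (fun ω => ∑ k, (B.mulVec (w ω) k) ^ 2) =
        2 * (frobSq (B.transpose * B) - ∑ i, ((B.transpose * B) i i) ^ 2) ∧
      RVar ν (fun ω => ∑ k, (B.mulVec (g ω) k) ^ 2) = 2 * frobSq (B.transpose * B) ∧
      RVar μ (fun ω => ∑ k, (B.mulVec (w ω) k) ^ 2) ≤
        RVar ν (fun ω => ∑ k, (B.mulVec (g ω) k) ^ 2) := by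
  -- Rademacher moments
  have hwmom := fun i => rademacher_moments (hwmeas i) (hwdist i).1 (hwdist i).2
  have hw1 : ∀ i, ∫ ω, w ω i ∂μ = 0 := fun i => (hwmom i).2.1
  have hw2 : ∀ i, ∫ ω, (w ω i) ^ 2 ∂μ = 1 := fun i => (hwmom i).2.2.1
  have hw3 : ∀ i, ∫ ω, (w ω i) ^ 3 ∂μ = 0 := fun i => (hwmom i).2.2.2.1
  have hw4 : ∀ i, ∫ ω, (w ω i) ^ 4 ∂μ = (1:ℝ) := fun i => (hwmom i).2.2.2.2
  have hwint : ∀ (i : Fin s) (n : ℕ), Integrable (fun ω => w ω i ^ n) μ :=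
    fun i n => (hwmom i).1 n
  have hVarw := var_quadform μ B (X := fun i ω => w ω i) hwmeas hwindep hwint
    hw1 hw2 hw3 hw4
  -- Gaussian moments
  have hmapint : ∀ (i : Fin s) (n : ℕ),
      ∫ ω, (g ω i) ^ n ∂ν = ∫ x, x ^ n ∂(gaussianReal 0 1) := by
    intro i n
    have h := integral_map (μ := ν) (φ := fun ω => g ω i) (f := fun x : ℝ => x ^ n)
      (hgmeas i).aemeasurable ((measurable_id.pow_const n).aestronglyMeasurable)
    rw [hgdist i] at h
    exact h.symm
  have hg1 : ∀ i, ∫ ω, g ω i ∂ν = 0 := by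
    intro i
    have h := hmapint i 1
    simp only [pow_one] at h
    rw [h]
    simpa using gm1
  have hg2 : ∀ i, ∫ ω, (g ω i) ^ 2 ∂ν = 1 := fun i => (hmapint i 2).trans gm2
  have hg3 : ∀ i, ∫ ω, (g ω i) ^ 3 ∂ν = 0 := fun i => (hmapint i 3).trans gm3
  have hg4 : ∀ i, ∫ ω, (g ω i) ^ 4 ∂ν = (3:ℝ) := fun i => (hmapint i 4).trans gm4
  have hgint : ∀ (i : Fin s) (n : ℕ), Integrable (fun ω => g ω i ^ n) ν := by
    intro i n
    have h := integrable_pow_gaussianReal01 n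
    rw [← hgdist i] at h
    exact (integrable_map_measure ((measurable_id.pow_const n).aestronglyMeasurable)
      (hgmeas i).aemeasurable).mp h
  have hVarg := var_quadform ν B (X := fun i ω => g ω i) hgmeas hgindep hgint
    hg1 hg2 hg3 hg4
  have hD : (0:ℝ) ≤ ∑ i, ((B.transpose * B) i i) ^ 2 :=
    Finset.sum_nonneg fun i _ => sq_nonneg _
  refine ⟨?_, ?_, ?_⟩
  · rw [show RVar μ (fun ω => ∑ k, (B.mulVec (w ω) k) ^ 2)
        = RVar μ (fun ω => ∑ k, (B.mulVec (fun i => w ω i) k) ^ 2) from rfl, hVarw]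
    ring
  · rw [show RVar ν (fun ω => ∑ k, (B.mulVec (g ω) k) ^ 2)
        = RVar ν (fun ω => ∑ k, (B.mulVec (fun i => g ω i) k) ^ 2) from rfl, hVarg]
    ring
  · rw [show RVar μ (fun ω => ∑ k, (B.mulVec (w ω) k) ^ 2)
        = RVar μ (fun ω => ∑ k, (B.mulVec (fun i => w ω i) k) ^ 2) from rfl, hVarw,
      show RVar ν (fun ω => ∑ k, (B.mulVec (g ω) k) ^ 2)
        = RVar ν (fun ω => ∑ k, (B.mulVec (fun i => g ω i) k) ^ 2) from rfl, hVarg]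
    linarith
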